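/- (Bendixson rectangle) Let n ≥ 1, A ∈ ℂ^{n×n}, H = (A + A*)/2 and K = (A − A*)/(2i). Let α и β be respectively the smallest and largest eigenvalues of the Hermitian matrix H, and let γ and δ be respectively the smallest and largest eigenvalues of the Hermitian matrix K. Then every z ∈ F(A) satisfies α ≤ Re(z) ≤ β and γ ≤ Im(z) ≤ δ; that is, F(A) is contained in the rectangle [α, β] × [γ, δ] of the complex plane. -/

import Mathlib

open Matrix

/-- The quadratic form x*Ax = ⟨x, Ax⟩ for A ∈ ℂ^{n×n} and x ∈ ℂⁿ. -/
noncomputable def qf {n : ℕ} (A : Matrix (Fin n) (Fin n) ℂ) (x : EuclideanSpace ℂ (Fin n)) : ℂ :=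
  inner ℂ x (Matrix.toEuclideanLin A x)

/-- The field of values (numerical range) F(A) = { x*Ax : ‖x‖ = 1 }. -/
noncomputable def numericalRange {n : ℕ} (A : Matrix (Fin n) (Fin n) ℂ) : Set ℂ :=
  { z | ∃ x : EuclideanSpace ℂ (Fin n), ‖x‖ = 1 ∧ qf A x = z }

/-- The Hermitian part H = (A + A*)/2. -/
noncomputable def hermPart {n : ℕ} (A : Matrix (Fin n) (Fin n) ℂ) : Matrix (Fin n) (Fin n) ℂ :=
  (2 : ℂ)⁻¹ • (A + Aᴴ)

/-- The skew part K = (A − A*)/(2i). -/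
noncomputable def skewPart {n : ℕ} (A : Matrix (Fin n) (Fin n) ℂ) : Matrix (Fin n) (Fin n) ℂ :=
  (2 * Complex.I)⁻¹ • (A - Aᴴ)

/-- The Hermitian matrix flow A(t) = cos(t)·H + sin(t)·K. -/
noncomputable def matFlow {n : ℕ} (A : Matrix (Fin n) (Fin n) ℂ) (t : ℝ) : Matrix (Fin n) (Fin n) ℂ :=
  (Real.cos t : ℂ) • hermPart A + (Real.sin t : ℂ) • skewPart A

lemma qf_smul {n : ℕ} (c : ℂ) (M : Matrix (Fin n) (Fin n) ℂ) (x : EuclideanSpace ℂ (Fin n)) :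
    qf (c • M) x = c * qf M x := by
  simp [qf, _root_.map_smul, inner_smul_right]

lemma qf_add {n : ℕ} (M N : Matrix (Fin n) (Fin n) ℂ) (x : EuclideanSpace ℂ (Fin n)) :
    qf (M + N) x = qf M x + qf N x := by
  simp [qf, map_add, inner_add_right]

lemma qf_sub {n : ℕ} (M N : Matrix (Fin n) (Fin n) ℂ) (x : EuclideanSpace ℂ (Fin n)) :
    qf (M - N) x = qf M x - qf N x := by
  simp [qf, map_sub, inner_sub_right]

lemma qf_conjTranspose {n : ℕ} (M : Matrix (Fin n) (Fin n) ℂ) (x : EuclideanSpace ℂ (Fin n)) :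
    qf Mᴴ x = (starRingEnd ℂ) (qf M x) := by
  rw [qf, qf, Matrix.toEuclideanLin_conjTranspose_eq_adjoint, LinearMap.adjoint_inner_right,
    ← inner_conj_symm]

lemma qf_hermPart {n : ℕ} (A : Matrix (Fin n) (Fin n) ℂ) (x : EuclideanSpace ℂ (Fin n)) :
    qf (hermPart A) x = ((qf A x).re : ℂ) := by
  rw [hermPart, qf_smul, qf_add, qf_conjTranspose, Complex.add_conj]
  ring_nf
  simp

lemma qf_skewPart {n : ℕ} (A : Matrix (Fin n) (Fin n) ℂ) (x : EuclideanSpace ℂ (Fin n)) :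
    qf (skewPart A) x = ((qf A x).im : ℂ) := by
  rw [skewPart, qf_smul, qf_sub, qf_conjTranspose, Complex.sub_conj]
  have h : (2 * Complex.I) ≠ 0 := by simp [Complex.I_ne_zero]
  field_simp
  push_cast
  ring

lemma hermPart_isHermitian {n : ℕ} (A : Matrix (Fin n) (Fin n) ℂ) :
    (hermPart A).IsHermitian := by
  unfold hermPart
  rw [Matrix.IsHermitian, Matrix.conjTranspose_smul, Matrix.conjTranspose_add,
    Matrix.conjTranspose_conjTranspose]
  simp [add_comm]

lemma skewPart_isHermitian {n : ℕ} (A : Matrix (Fin n) (Fin n) ℂ) :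
    (skewPart A).IsHermitian := by
  unfold skewPart
  rw [Matrix.IsHermitian, Matrix.conjTranspose_smul, Matrix.conjTranspose_sub,
    Matrix.conjTranspose_conjTranspose]
  rw [smul_sub, smul_sub]
  have : star (2 * Complex.I)⁻¹ = -(2 * Complex.I)⁻¹ := by
    rw [star_inv₀, neg_inv]
    congr 1
    simp [Complex.ext_iff]
  rw [this]
  module

lemma eig_mem {n : ℕ} {M : Matrix (Fin n) (Fin n) ℂ} (hM : M.IsHermitian) (i : Fin n) :
    ((hM.eigenvalues i : ℂ)) ∈ spectrum ℂ M := by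
  rw [← Matrix.spectrum_toEuclideanLin]
  rw [← Module.End.hasEigenvalue_iff_mem_spectrum]
  apply Module.End.hasEigenvalue_of_hasEigenvector (x := hM.eigenvectorBasis i)
  constructor
  · rw [Module.End.mem_eigenspace_iff]
    have := hM.mulVec_eigenvectorBasis i
    apply PiLp.ext
    intro j
    have h2 := congrFun this j
    simpa [Matrix.toEuclideanLin_apply, Pi.smul_apply, Complex.real_smul] using h2
  · exact hM.eigenvectorBasis.orthonormal.ne_zero i

lemma qf_eq_sum {n : ℕ} {M : Matrix (Fin n) (Fin n) ℂ} (hM : M.IsHermitian)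
    (x : EuclideanSpace ℂ (Fin n)) :
    qf M x = ∑ i, (hM.eigenvalues i : ℂ) * (‖hM.eigenvectorBasis.repr x i‖ : ℂ)^2 := by
  set b := hM.eigenvectorBasis
  set T := Matrix.toEuclideanLin M
  have hsym : LinearMap.IsSymmetric T := Matrix.isHermitian_iff_isSymmetric.1 hM
  have hTb : ∀ i, T (b i) = (hM.eigenvalues i : ℂ) • b i := by
    intro i
    have := hM.mulVec_eigenvectorBasis i
    apply PiLp.ext
    intro j
    have h2 := congrFun this j
    simpa [T, Matrix.toEuclideanLin_apply, Pi.smul_apply, Complex.real_smul] using h2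
  have hrepr : ∀ i, b.repr (T x) i = (hM.eigenvalues i : ℂ) * b.repr x i := by
    intro i
    rw [b.repr_apply_apply, b.repr_apply_apply, ← hsym (b i) x, hTb i, inner_smul_left]
    simp
  have : qf M x = inner (𝕜 := ℂ) (b.repr x) (b.repr (T x)) := by
    rw [qf]
    exact (b.repr.inner_map_map x (T x)).symm
  rw [this, PiLp.inner_apply]
  apply Finset.sum_congr rfl
  intro i _
  rw [hrepr i]
  have : (starRingEnd ℂ) (b.repr x i) * ((hM.eigenvalues i : ℂ) * b.repr x i)
      = (hM.eigenvalues i : ℂ) * ((starRingEnd ℂ) (b.repr x i) * b.repr x i) := by ring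
  rw [RCLike.inner_apply, mul_assoc, Complex.mul_conj']

lemma herm_qf_bounds {n : ℕ} {M : Matrix (Fin n) (Fin n) ℂ} (hM : M.IsHermitian)
    {x : EuclideanSpace ℂ (Fin n)} (hx : ‖x‖ = 1) {a b : ℝ}
    (ha : ∀ r : ℝ, (r : ℂ) ∈ spectrum ℂ M → a ≤ r)
    (hb : ∀ r : ℝ, (r : ℂ) ∈ spectrum ℂ M → r ≤ b) :
    a ≤ (qf M x).re ∧ (qf M x).re ≤ b := by
  set c : Fin n → ℝ := fun i => ‖hM.eigenvectorBasis.repr x i‖ ^ 2 with hc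
  have hre : (qf M x).re = ∑ i, hM.eigenvalues i * c i := by
    rw [qf_eq_sum hM x, Complex.re_sum]
    apply Finset.sum_congr rfl
    intro i _
    simp [hc, ← Complex.ofReal_pow]
  have hsum : ∑ i, c i = 1 := by
    have h1 : ‖hM.eigenvectorBasis.repr x‖ = 1 := by
      rw [LinearIsometryEquiv.norm_map]; exact hx
    have := EuclideanSpace.norm_eq (hM.eigenvectorBasis.repr x)
    rw [h1] at this
    have h2 : (1 : ℝ) = ∑ i, ‖hM.eigenvectorBasis.repr x i‖ ^ 2 := by
      have := congrArg (fun t : ℝ => t ^ 2) this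
      simpa [Real.sq_sqrt (Finset.sum_nonneg fun i _ => sq_nonneg _)] using this
    simpa [hc] using h2.symm
  have hcnn : ∀ i, 0 ≤ c i := fun i => sq_nonneg _
  constructor
  · rw [hre]
    calc a = ∑ i, a * c i := by rw [← Finset.mul_sum, hsum, mul_one]
    _ ≤ ∑ i, hM.eigenvalues i * c i := by
        apply Finset.sum_le_sum
        intro i _
        exact mul_le_mul_of_nonneg_right (ha _ (eig_mem hM i)) (hcnn i)
  · rw [hre]
    calc ∑ i, hM.eigenvalues i * c i ≤ ∑ i, b * c i := by
          apply Finset.sum_le_sum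
          intro i _
          exact mul_le_mul_of_nonneg_right (hb _ (eig_mem hM i)) (hcnn i)
    _ = b := by rw [← Finset.mul_sum, hsum, mul_one]

/-- Bendixson rectangle: with α, β the smallest and largest eigenvalues of
H = (A+A*)/2 and γ, δ those of K = (A−A*)/(2i), every z ∈ F(A) satisfies
α ≤ Re z ≤ β and γ ≤ Im z ≤ δ. -/
theorem bendixson_rectangle (n : ℕ) (hn : 1 ≤ n) (A : Matrix (Fin n) (Fin n) ℂ)
    (α β γ δ : ℝ)
    (hα : IsLeast {r : ℝ | (r : ℂ) ∈ spectrum ℂ (hermPart A)} α)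
    (hβ : IsGreatest {r : ℝ | (r : ℂ) ∈ spectrum ℂ (hermPart A)} β)
    (hγ : IsLeast {r : ℝ | (r : ℂ) ∈ spectrum ℂ (skewPart A)} γ)
    (hδ : IsGreatest {r : ℝ | (r : ℂ) ∈ spectrum ℂ (skewPart A)} δ) :
    ∀ z ∈ numericalRange A, α ≤ z.re ∧ z.re ≤ β ∧ γ ≤ z.im ∧ z.im ≤ δ := by
  rintro z ⟨x, hx, rfl⟩
  have hH := herm_qf_bounds (hermPart_isHermitian A) hx
    (fun r hr => hα.2 hr) (fun r hr => hβ.2 hr)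
  have hK := herm_qf_bounds (skewPart_isHermitian A) hx
    (fun r hr => hγ.2 hr) (fun r hr => hδ.2 hr)
  rw [qf_hermPart] at hH
  rw [qf_skewPart] at hK
  simp only [Complex.ofReal_re] at hH hK
  exact ⟨hH.1, hH.2, hK.1, hK.2⟩
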